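/- The following lower bound holds: ∫_0^∞ q(s) ds ≥ A^{3/2}·√(1 + 3aA) / (2·√3·μ). -/

import Mathlib

set_option maxHeartbeats 1000000


open MeasureTheory Filter Real

theorem stmt_12 (a μ A : ℝ) (ha : 0 < a) (hμ : 1 / 3 < μ) (hA : 0 < A)
    (q : ℝ → ℝ) (hq : ContDiff ℝ 2 q)
    (hode : ∀ s : ℝ, deriv (deriv q) s * q s + a * s * deriv q s * q s
      + μ * q s + (1 / 3) * s * deriv q s = 0)
    (hq0 : q 0 = A) (hq0' : deriv q 0 = 0)
    (hpos : ∀ s : ℝ, 0 < q s)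
    (heven : ∀ s : ℝ, q (-s) = q s)
    (hanti : StrictAntiOn q (Set.Ioi 0))
    (hlim : Tendsto q atTop (nhds 0)) (hlim' : Tendsto (deriv q) atTop (nhds 0))
    (hint : Integrable q) :
    ∫ s in Set.Ioi (0 : ℝ), q s
      ≥ A ^ ((3 : ℝ) / 2) * Real.sqrt (1 + 3 * a * A) / (2 * Real.sqrt 3 * μ) := by
  have hμ0 : (0:ℝ) < μ := lt_trans (by norm_num) hμ
  have hcq : Continuous q := hq.continuous
  have hdq : Differentiable ℝ q := hq.differentiable (by norm_num)
  have hq2 : ContDiff ℝ (1 + 1) q := by exact_mod_cast hq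
  have hdq1 : ContDiff ℝ 1 (deriv q) := (contDiff_succ_iff_deriv.mp hq2).2.2
  have hdq' : Differentiable ℝ (deriv q) := hdq1.differentiable (by norm_num)
  have hcq' : Continuous (deriv q) := hdq1.continuous
  have hcq'' : Continuous (deriv (deriv q)) := hdq1.continuous_deriv le_rfl
  -- q ≤ A on [0, ∞)
  have hqA : ∀ s : ℝ, 0 ≤ s → q s ≤ A := by
    intro s hs
    rcases hs.eq_or_lt with h | h
    · rw [← h, hq0]
    · have hcont : Tendsto q (nhdsWithin 0 (Set.Ioi 0)) (nhds A) := by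
        have := hcq.tendsto 0
        rw [hq0] at this
        exact this.mono_left nhdsWithin_le_nhds
      refine ge_of_tendsto hcont ?_
      have hmem : Set.Ioo (0:ℝ) s ∈ nhdsWithin 0 (Set.Ioi 0) :=
        Ioo_mem_nhdsGT_of_mem ⟨le_refl 0, h⟩
      filter_upwards [hmem] with t ht
      exact (hanti ht.1 h ht.2).le
  have hAnti : AntitoneOn q (Set.Ici 0) := by
    intro x hx y hy hxy
    rcases hxy.eq_or_lt with rfl | hlt
    · exact le_refl _
    · rcases (Set.mem_Ici.mp hx : (0:ℝ) ≤ x).eq_or_lt with h0 | h0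
      · rw [← h0, hq0]
        exact hqA y (le_of_lt (h0 ▸ hlt))
      · exact (hanti h0 (lt_trans h0 hlt) hlt).le
  -- the constant
  set gA := Real.sqrt (A / 3 + a * A ^ 2 / 2) with hgA_def
  have hGA0 : (0:ℝ) ≤ A / 3 + a * A ^ 2 / 2 := by positivity
  have hgA2 : gA ^ 2 = A / 3 + a * A ^ 2 / 2 := Real.sq_sqrt hGA0
  have hgA0 : 0 ≤ gA := Real.sqrt_nonneg _
  set c := gA / A with hc_def
  have hc0 : 0 ≤ c := by positivity
  -- the auxiliary function W and its derivative
  set W : ℝ → ℝ := fun s => deriv q s * q s + a * (s * q s ^ 2) / 2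
      + 1 / 3 * (s * q s) + c * q s ^ 2 with hW_def
  set D : ℝ → ℝ := fun s => -(μ * q s)
      + (deriv q s ^ 2 + (q s / 3 + a * q s ^ 2 / 2) + 2 * c * deriv q s * q s) with hD_def
  have hW : ∀ s : ℝ, HasDerivAt W (D s) s := by
    intro s
    have h1 : HasDerivAt q (deriv q s) s := (hdq s).hasDerivAt
    have h2 : HasDerivAt (deriv q) (deriv (deriv q) s) s := (hdq' s).hasDerivAt
    have hmain := (((h2.mul h1).add
        ((((hasDerivAt_id s).mul (h1.pow 2)).const_mul a).div_const 2)).add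
        (((hasDerivAt_id s).mul h1).const_mul (1/3))).add ((h1.pow 2).const_mul c)
    refine hmain.congr_deriv (Eq.symm ?_)
    simp only [hD_def, id_eq, pow_one, Pi.pow_apply]
    linear_combination (-1 : ℝ) * hode s
  have hDcont : Continuous D := by
    apply Continuous.add
    · exact (continuous_const.mul hcq).neg
    · exact (((hcq'.pow 2).add ((hcq.div_const 3).add
        ((continuous_const.mul (hcq.pow 2)).div_const 2))).add
        ((continuous_const.mul hcq').mul hcq))
  -- pointwise bound  -μ q ≤ D
  have hptw : ∀ s : ℝ, 0 ≤ s → -(μ * q s) ≤ D s := by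
    intro s hs
    have hx0 : 0 < q s := hpos s
    have hxA : q s ≤ A := hqA s hs
    have hGx0 : (0:ℝ) ≤ q s / 3 + a * q s ^ 2 / 2 := by positivity
    have hsx : c * q s ≤ Real.sqrt (q s / 3 + a * q s ^ 2 / 2) := by
      rw [show c * q s = Real.sqrt ((c * q s) ^ 2) from (Real.sqrt_sq (by positivity)).symm]
      apply Real.sqrt_le_sqrt
      rw [hc_def, div_mul_eq_mul_div, div_pow,
        div_le_iff₀ (by positivity : (0:ℝ) < A ^ 2), mul_pow, hgA2]
      nlinarith [mul_nonneg (mul_nonneg hx0.le hA.le) (sub_nonneg.mpr hxA),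
        sq_nonneg (q s), hx0.le, hA.le, ha.le]
    have hsq : Real.sqrt (q s / 3 + a * q s ^ 2 / 2) ^ 2 = q s / 3 + a * q s ^ 2 / 2 :=
      Real.sq_sqrt hGx0
    have habs : |deriv q s| ^ 2 = deriv q s ^ 2 := sq_abs _
    have hd1 : -|deriv q s| ≤ deriv q s := neg_abs_le _
    have hd2 : deriv q s ≤ |deriv q s| := le_abs_self _
    simp only [hD_def]
    nlinarith [sq_nonneg (|deriv q s| - Real.sqrt (q s / 3 + a * q s ^ 2 / 2)),
      abs_nonneg (deriv q s),
      mul_le_mul_of_nonneg_left hsx (abs_nonneg (deriv q s)),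
      Real.sqrt_nonneg (q s / 3 + a * q s ^ 2 / 2),
      mul_nonneg (mul_nonneg hc0 hx0.le)
        (by linarith [neg_abs_le (deriv q s)] : (0:ℝ) ≤ deriv q s + |deriv q s|)]
  -- main finite-interval bound
  set I := ∫ s in Set.Ioi (0:ℝ), q s with hI_def
  have hIub : ∀ T : ℝ, 0 ≤ T → (∫ s in (0:ℝ)..T, q s) ≤ I := by
    intro T hT
    rw [intervalIntegral.integral_of_le hT]
    apply setIntegral_mono_set hint.integrableOn
    · exact Filter.Eventually.of_forall (fun s => (hpos s).le)
    · exact (Set.Ioc_subset_Ioi_self).eventuallyLE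
  have hkey : ∀ T : ℝ, 0 ≤ T → c * A ^ 2 - W T ≤ μ * I := by
    intro T hT
    have hftc : ∫ s in (0:ℝ)..T, D s = W T - W 0 :=
      intervalIntegral.integral_eq_sub_of_hasDerivAt (fun s _ => hW s)
        (hDcont.intervalIntegrable 0 T)
    have hmono : (∫ s in (0:ℝ)..T, -(μ * q s)) ≤ ∫ s in (0:ℝ)..T, D s := by
      apply intervalIntegral.integral_mono_on hT
        (((continuous_const.mul hcq).neg).intervalIntegrable 0 T)
        (hDcont.intervalIntegrable 0 T)
      intro s hs
      exact hptw s hs.1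
    have hW0 : W 0 = c * A ^ 2 := by
      simp only [hW_def, hq0, hq0']
      ring
    have heq : (∫ s in (0:ℝ)..T, -(μ * q s)) = -(μ * ∫ s in (0:ℝ)..T, q s) := by
      rw [intervalIntegral.integral_neg, intervalIntegral.integral_const_mul]
    rw [heq, hftc, hW0] at hmono
    have h2 : μ * (∫ s in (0:ℝ)..T, q s) ≤ μ * I :=
      mul_le_mul_of_nonneg_left (hIub T hT) hμ0.le
    linarith
  -- T * q T → 0
  have hTq : Tendsto (fun T : ℝ => T * q T) atTop (nhds 0) := by
    have hI1 : Tendsto (fun T : ℝ => ∫ s in (0:ℝ)..T, q s) atTop (nhds I) :=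
      intervalIntegral_tendsto_integral_Ioi 0 hint.integrableOn tendsto_id
    have hI2 : Tendsto (fun T : ℝ => ∫ s in (0:ℝ)..(T/2), q s) atTop (nhds I) :=
      hI1.comp (tendsto_id.atTop_div_const two_pos)
    have hdiff : Tendsto
        (fun T : ℝ => 2 * ((∫ s in (0:ℝ)..T, q s) - ∫ s in (0:ℝ)..(T/2), q s))
        atTop (nhds 0) := by
      have := (hI1.sub hI2).const_mul (2:ℝ)
      simpa using this
    apply tendsto_of_tendsto_of_tendsto_of_le_of_le' tendsto_const_nhds hdiff
    · filter_upwards [eventually_ge_atTop (0:ℝ)] with T hT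
      exact mul_nonneg hT (hpos T).le
    · filter_upwards [eventually_ge_atTop (0:ℝ)] with T hT
      have hhalf : T / 2 ≤ T := by linarith
      have hsub : (∫ s in (0:ℝ)..T, q s) - (∫ s in (0:ℝ)..(T/2), q s)
          = ∫ s in (T/2)..T, q s := by
        rw [intervalIntegral.integral_interval_sub_left
          (hcq.intervalIntegrable 0 T) (hcq.intervalIntegrable 0 (T/2))]
      have hlow : (T - T/2) * q T ≤ ∫ s in (T/2)..T, q s := by
        have := intervalIntegral.integral_mono_on (μ := volume) hhalf
          (intervalIntegrable_const) (hcq.intervalIntegrable (T/2) T)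
          (fun s hs => hAnti (Set.mem_Ici.mpr (by linarith [hs.1] : (0:ℝ) ≤ s))
            (Set.mem_Ici.mpr hT) hs.2)
        simpa [smul_eq_mul] using this
      rw [hsub] at *
      nlinarith [hlow]
  -- W T → 0
  have hWlim : Tendsto W atTop (nhds 0) := by
    have h1 : Tendsto (fun T => deriv q T * q T) atTop (nhds 0) := by
      simpa using hlim'.mul hlim
    have h2 : Tendsto (fun T => a * (T * q T ^ 2) / 2) atTop (nhds 0) := by
      have : Tendsto (fun T : ℝ => T * q T ^ 2) atTop (nhds 0) := by
        have := hTq.mul hlim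
        simpa [mul_assoc, pow_two] using this
      simpa using (this.const_mul a).div_const 2
    have h3 : Tendsto (fun T : ℝ => 1 / 3 * (T * q T)) atTop (nhds 0) := by
      simpa using hTq.const_mul (1/3 : ℝ)
    have h4 : Tendsto (fun T => c * q T ^ 2) atTop (nhds 0) := by
      have : Tendsto (fun T => q T ^ 2) atTop (nhds 0) := by
        have := hlim.mul hlim
        simpa [pow_two] using this
      simpa using this.const_mul c
    have := ((h1.add h2).add h3).add h4
    simpa [hW_def] using this
  -- conclude  c A² ≤ μ I
  have hmain : c * A ^ 2 ≤ μ * I := by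
    have hten : Tendsto (fun T => c * A ^ 2 - W T) atTop (nhds (c * A ^ 2)) := by
      simpa using (tendsto_const_nhds (α := ℝ) (x := c * A ^ 2)).sub hWlim
    refine le_of_tendsto hten ?_
    filter_upwards [eventually_ge_atTop (0:ℝ)] with T hT
    exact hkey T hT
  have hcA : c * A ^ 2 = A * gA := by
    field_simp [hc_def]
    rw [hc_def, div_mul_cancel₀ _ hA.ne']
  -- final algebra
  have hfin : A ^ ((3:ℝ)/2) * Real.sqrt (1 + 3 * a * A) / (2 * Real.sqrt 3) ≤ A * gA := by
    have h32 : A ^ ((3:ℝ)/2) = A * Real.sqrt A := by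
      rw [show (3:ℝ)/2 = 1 + 1/2 by norm_num, Real.rpow_add hA, Real.rpow_one,
        ← Real.sqrt_eq_rpow]
    have e12 : (2:ℝ) * Real.sqrt 3 = Real.sqrt 12 := by
      rw [show (12:ℝ) = 2^2*3 by norm_num, Real.sqrt_mul (by positivity),
        Real.sqrt_sq (by norm_num)]
    rw [h32, e12]
    have e : Real.sqrt (A * (1 + 3*a*A) / 12)
        = Real.sqrt A * Real.sqrt (1 + 3*a*A) / Real.sqrt 12 := by
      rw [Real.sqrt_div (by positivity) 12, Real.sqrt_mul hA.le]
    have : A * Real.sqrt A * Real.sqrt (1 + 3*a*A) / Real.sqrt 12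
        = A * Real.sqrt (A * (1 + 3*a*A) / 12) := by
      rw [e]; ring
    rw [this]
    apply mul_le_mul_of_nonneg_left _ hA.le
    apply Real.sqrt_le_sqrt
    nlinarith [hA.le, ha.le, sq_nonneg A, mul_pos ha (mul_pos hA hA)]
  -- put everything together
  rw [ge_iff_le, show (2:ℝ) * Real.sqrt 3 * μ = (2 * Real.sqrt 3) * μ by ring, ← div_div]
  have hstep : A ^ ((3:ℝ)/2) * Real.sqrt (1 + 3*a*A) / (2 * Real.sqrt 3) / μ
      ≤ (A * gA) / μ := (div_le_div_iff_of_pos_right hμ0).mpr hfin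
  calc A ^ ((3:ℝ)/2) * Real.sqrt (1 + 3*a*A) / (2 * Real.sqrt 3) / μ
      ≤ (A * gA) / μ := hstep
    _ ≤ I := by
        rw [div_le_iff₀ hμ0]
        calc A * gA = c * A ^ 2 := hcA.symm
          _ ≤ μ * I := hmain
          _ = I * μ := by ring
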